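/- Let g ∈ ℂ^N have all entries nonzero, with α_min = min_n |g_n|. Let ĝ ∈ ℂ^N satisfy ‖g − ĝ‖_∞ ≤ α_min/2. Let R, R̂ ∈ ℂ^{N×N}. Then ‖diag(ĝ)^{-1} R̂ diag(conj(ĝ))^{-1} − diag(g)^{-1} R diag(conj(g))^{-1}‖ ≤ (4/α_min²)‖R − R̂‖ + (12 ‖R‖ / α_min³) ‖g − ĝ‖_∞, where ‖·‖ is the spectral norm and ‖·‖_∞ the entrywise max norm on ℂ^N. -/

import Mathlib

open Complex Matrix

/-- Spectral (ℓ²-operator) norm of a square complex matrix. -/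
noncomputable def specNorm {N : ℕ} (M : Matrix (Fin N) (Fin N) ℂ) : ℝ :=
  ‖Matrix.toEuclideanCLM (𝕜 := ℂ) M‖

open scoped Matrix.Norms.L2Operator in
lemma specNorm_eq_l2 {N : ℕ} (M : Matrix (Fin N) (Fin N) ℂ) : specNorm M = ‖M‖ := rfl

lemma diag_specNorm_le {N : ℕ} (d : Fin N → ℂ) (c : ℝ) (hc : 0 ≤ c)
    (h : ∀ n, ‖d n‖ ≤ c) : specNorm (Matrix.diagonal d) ≤ c := by
  unfold specNorm
  apply ContinuousLinearMap.opNorm_le_bound _ hc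
  intro x
  have hx : x = (WithLp.equiv 2 (Fin N → ℂ)).symm (WithLp.equiv 2 (Fin N → ℂ) x) := rfl
  rw [hx, WithLp.equiv_symm_apply, Matrix.toEuclideanCLM_toLp, ← WithLp.equiv_symm_apply]
  rw [EuclideanSpace.norm_eq, EuclideanSpace.norm_eq]
  have key : ∑ i, ‖((WithLp.equiv 2 (Fin N → ℂ)).symm
      (Matrix.diagonal d *ᵥ (WithLp.equiv 2 (Fin N → ℂ)) x)) i‖ ^ 2 ≤
      c ^ 2 * ∑ i, ‖((WithLp.equiv 2 (Fin N → ℂ)).symm ((WithLp.equiv 2 (Fin N → ℂ)) x)) i‖ ^ 2 := by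
    rw [Finset.mul_sum]
    apply Finset.sum_le_sum
    intro i _
    have heq : ((WithLp.equiv 2 (Fin N → ℂ)).symm
        (Matrix.diagonal d *ᵥ (WithLp.equiv 2 (Fin N → ℂ)) x)) i =
        d i * ((WithLp.equiv 2 (Fin N → ℂ)) x) i := by
      simp [Matrix.mulVec_diagonal]
    rw [heq]
    have h1 : ‖d i * ((WithLp.equiv 2 (Fin N → ℂ)) x) i‖ ≤
        c * ‖((WithLp.equiv 2 (Fin N → ℂ)) x) i‖ := by
      rw [norm_mul]
      exact mul_le_mul_of_nonneg_right (h i) (norm_nonneg _)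
    calc ‖d i * ((WithLp.equiv 2 (Fin N → ℂ)) x) i‖ ^ 2
        ≤ (c * ‖((WithLp.equiv 2 (Fin N → ℂ)) x) i‖) ^ 2 :=
          pow_le_pow_left₀ (norm_nonneg _) h1 2
      _ = c ^ 2 * ‖((WithLp.equiv 2 (Fin N → ℂ)) x) i‖ ^ 2 := by ring
  calc Real.sqrt (∑ i, ‖((WithLp.equiv 2 (Fin N → ℂ)).symm
        (Matrix.diagonal d *ᵥ (WithLp.equiv 2 (Fin N → ℂ)) x)) i‖ ^ 2)
      ≤ Real.sqrt (c ^ 2 * ∑ i, ‖x i‖ ^ 2) := Real.sqrt_le_sqrt key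
    _ = c * Real.sqrt (∑ i, ‖x i‖ ^ 2) := by
        rw [Real.sqrt_mul (sq_nonneg c), Real.sqrt_sq hc]

lemma diag_inv_eq {N : ℕ} (v : Fin N → ℂ) (hv : ∀ n, v n ≠ 0) :
    (Matrix.diagonal v)⁻¹ = Matrix.diagonal (fun n => (v n)⁻¹) := by
  apply Matrix.inv_eq_right_inv
  rw [Matrix.diagonal_mul_diagonal]
  have : (fun n => v n * (v n)⁻¹) = fun _ => (1:ℂ) :=
    funext fun n => mul_inv_cancel₀ (hv n)
  rw [this, Matrix.diagonal_one]

open scoped Matrix.Norms.L2Operator in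
lemma specNorm_nonneg {N : ℕ} (M : Matrix (Fin N) (Fin N) ℂ) : 0 ≤ specNorm M :=
  norm_nonneg (M : Matrix (Fin N) (Fin N) ℂ)

open scoped Matrix.Norms.L2Operator in
lemma specNorm_add_le {N : ℕ} (A B : Matrix (Fin N) (Fin N) ℂ) :
    specNorm (A + B) ≤ specNorm A + specNorm B := norm_add_le A B

open scoped Matrix.Norms.L2Operator in
lemma specNorm_mul_le {N : ℕ} (A B : Matrix (Fin N) (Fin N) ℂ) :
    specNorm (A * B) ≤ specNorm A * specNorm B := norm_mul_le A B

open scoped Matrix.Norms.L2Operator in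
lemma specNorm_sub_rev {N : ℕ} (A B : Matrix (Fin N) (Fin N) ℂ) :
    specNorm (A - B) = specNorm (B - A) := norm_sub_rev A B

theorem stmt16 {N : ℕ} (hN : 0 < N) (g gh : Fin N → ℂ)
    (hg : ∀ n, g n ≠ 0)
    (αmin : ℝ) (hαmin : αmin = ⨅ n, ‖g n‖)
    (hclose : ∀ n, ‖g n - gh n‖ ≤ αmin / 2)
    (R Rh : Matrix (Fin N) (Fin N) ℂ) :
    specNorm
        ((Matrix.diagonal gh)⁻¹ * Rh * (Matrix.diagonal (fun n => starRingEnd ℂ (gh n)))⁻¹ -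
          (Matrix.diagonal g)⁻¹ * R * (Matrix.diagonal (fun n => starRingEnd ℂ (g n)))⁻¹) ≤
      (4 / αmin^2) * specNorm (R - Rh) +
        (12 * specNorm R / αmin^3) * (⨆ n, ‖g n - gh n‖) := by
  haveI : Nonempty (Fin N) := ⟨⟨0, hN⟩⟩
  have hle : ∀ n, αmin ≤ ‖g n‖ := by
    intro n; rw [hαmin]
    exact ciInf_le (Finite.bddBelow_range _) n
  have hα : 0 < αmin := by
    obtain ⟨n0, hn0⟩ := Finite.exists_min (fun n => ‖g n‖)
    have h1 : αmin = ‖g n0‖ :=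
      le_antisymm (hle n0) (by rw [hαmin]; exact le_ciInf hn0)
    rw [h1]; exact norm_pos_iff.mpr (hg n0)
  set ε : ℝ := ⨆ n, ‖g n - gh n‖ with hε
  have hεle : ∀ n, ‖g n - gh n‖ ≤ ε := fun n =>
    le_ciSup (f := fun n => ‖g n - gh n‖) (Finite.bddAbove_range _) n
  have hε0 : 0 ≤ ε := le_trans (norm_nonneg _) (hεle ⟨0, hN⟩)
  have hghabs : ∀ n, αmin / 2 ≤ ‖gh n‖ := by
    intro n
    have h2 : ‖g n‖ ≤ ‖g n - gh n‖ + ‖gh n‖ := by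
      calc ‖g n‖ = ‖(g n - gh n) + gh n‖ := by ring_nf
        _ ≤ _ := norm_add_le _ _
    have := hclose n; have := hle n; linarith
  have hgh : ∀ n, gh n ≠ 0 := by
    intro n hzero
    have := hghabs n; rw [hzero] at this; simp at this; linarith
  rw [diag_inv_eq gh hgh, diag_inv_eq g hg,
      diag_inv_eq (fun n => starRingEnd ℂ (gh n)) (fun n => by simpa using hgh n),
      diag_inv_eq (fun n => starRingEnd ℂ (g n)) (fun n => by simpa using hg n)]
  set Gh := Matrix.diagonal (fun n => (gh n)⁻¹) with hGh
  set G := Matrix.diagonal (fun n => (g n)⁻¹) with hG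
  set Ghc := Matrix.diagonal (fun n => ((starRingEnd ℂ) (gh n))⁻¹) with hGhc
  set Gc := Matrix.diagonal (fun n => ((starRingEnd ℂ) (g n))⁻¹) with hGc
  have hinv_gh : ∀ n, ‖(gh n)⁻¹‖ ≤ 2 / αmin := by
    intro n
    rw [norm_inv]
    have h2 : (‖gh n‖)⁻¹ ≤ (αmin / 2)⁻¹ :=
      inv_anti₀ (by positivity) (hghabs n)
    rwa [inv_div] at h2
  have hinv_g : ∀ n, ‖(g n)⁻¹‖ ≤ 1 / αmin := by
    intro n
    rw [norm_inv, one_div]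
    exact inv_anti₀ hα (hle n)
  have hdiff : ∀ n, ‖(gh n)⁻¹ - (g n)⁻¹‖ ≤ 2 * ε / αmin ^ 2 := by
    intro n
    have heq : (gh n)⁻¹ - (g n)⁻¹ = (g n - gh n) * (g n)⁻¹ * (gh n)⁻¹ := by
      rw [inv_sub_inv (hgh n) (hg n), div_eq_mul_inv, mul_inv]
      ring
    rw [heq, norm_mul, norm_mul]
    calc ‖g n - gh n‖ * ‖(g n)⁻¹‖ * ‖(gh n)⁻¹‖
        ≤ ε * (1 / αmin) * (2 / αmin) := by
          apply mul_le_mul (mul_le_mul (hεle n) (hinv_g n)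
            (norm_nonneg _) hε0) (hinv_gh n) (norm_nonneg _)
          positivity
      _ = 2 * ε / αmin ^ 2 := by field_simp
  have habs_conj : ∀ z : ℂ, ‖((starRingEnd ℂ) z)⁻¹‖ = ‖z⁻¹‖ := by
    intro z; rw [norm_inv, norm_inv, Complex.norm_conj]
  have hGh_norm : specNorm Gh ≤ 2 / αmin :=
    diag_specNorm_le _ _ (by positivity) hinv_gh
  have hG_norm : specNorm G ≤ 1 / αmin :=
    diag_specNorm_le _ _ (by positivity) hinv_g
  have hGhc_norm : specNorm Ghc ≤ 2 / αmin :=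
    diag_specNorm_le _ _ (by positivity) (fun n => by rw [habs_conj]; exact hinv_gh n)
  have hGhG_norm : specNorm (Gh - G) ≤ 2 * ε / αmin ^ 2 := by
    rw [hGh, hG, Matrix.diagonal_sub]
    exact diag_specNorm_le _ _ (by positivity) hdiff
  have hGhcGc_norm : specNorm (Ghc - Gc) ≤ 2 * ε / αmin ^ 2 := by
    rw [hGhc, hGc, Matrix.diagonal_sub]
    apply diag_specNorm_le _ _ (by positivity)
    intro n
    have hcnj : ((starRingEnd ℂ) (gh n))⁻¹ - ((starRingEnd ℂ) (g n))⁻¹ =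
        (starRingEnd ℂ) ((gh n)⁻¹ - (g n)⁻¹) := by
      rw [map_sub, map_inv₀, map_inv₀]
    rw [hcnj, Complex.norm_conj]
    exact hdiff n
  have hdecomp : Gh * Rh * Ghc - G * R * Gc =
      Gh * (Rh - R) * Ghc + (Gh - G) * R * Ghc + G * R * (Ghc - Gc) := by
    noncomm_ring
  rw [hdecomp]
  have prod_le : ∀ A B C : Matrix (Fin N) (Fin N) ℂ,
      specNorm (A * B * C) ≤ specNorm A * specNorm B * specNorm C := fun A B C =>
    le_trans (specNorm_mul_le _ _)
      (mul_le_mul_of_nonneg_right (specNorm_mul_le _ _) (specNorm_nonneg _))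
  have tri : specNorm (Gh * (Rh - R) * Ghc + (Gh - G) * R * Ghc + G * R * (Ghc - Gc)) ≤
      specNorm (Gh * (Rh - R) * Ghc) + specNorm ((Gh - G) * R * Ghc) +
        specNorm (G * R * (Ghc - Gc)) :=
    le_trans (specNorm_add_le _ _) (by gcongr; exact specNorm_add_le _ _)
  have m1 : specNorm (Gh * (Rh - R) * Ghc) ≤ (2 / αmin) * specNorm (R - Rh) * (2 / αmin) := by
    refine le_trans (prod_le _ _ _) ?_
    rw [specNorm_sub_rev Rh R]
    exact mul_le_mul (mul_le_mul hGh_norm le_rfl (specNorm_nonneg _) (by positivity))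
      hGhc_norm (specNorm_nonneg _) (mul_nonneg (by positivity) (specNorm_nonneg _))
  have m2 : specNorm ((Gh - G) * R * Ghc) ≤
      (2 * ε / αmin ^ 2) * specNorm R * (2 / αmin) := by
    refine le_trans (prod_le _ _ _) ?_
    exact mul_le_mul (mul_le_mul hGhG_norm le_rfl (specNorm_nonneg _) (by positivity))
      hGhc_norm (specNorm_nonneg _) (mul_nonneg (by positivity) (specNorm_nonneg _))
  have m3 : specNorm (G * R * (Ghc - Gc)) ≤
      (1 / αmin) * specNorm R * (2 * ε / αmin ^ 2) := by
    refine le_trans (prod_le _ _ _) ?_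
    exact mul_le_mul (mul_le_mul hG_norm le_rfl (specNorm_nonneg _) (by positivity))
      hGhcGc_norm (specNorm_nonneg _) (mul_nonneg (by positivity) (specNorm_nonneg _))
  have e1 : (2 / αmin) * specNorm (R - Rh) * (2 / αmin) = 4 / αmin ^ 2 * specNorm (R - Rh) := by
    field_simp; ring
  have e2 : (2 * ε / αmin ^ 2) * specNorm R * (2 / αmin) +
      (1 / αmin) * specNorm R * (2 * ε / αmin ^ 2) = 6 * (specNorm R * ε) / αmin ^ 3 := by
    field_simp; ring
  have e3 : (12 * specNorm R / αmin ^ 3) * ε =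
      6 * (specNorm R * ε) / αmin ^ 3 + 6 * (specNorm R * ε) / αmin ^ 3 := by
    field_simp; ring
  have h6 : 0 ≤ 6 * (specNorm R * ε) / αmin ^ 3 := by
    have := specNorm_nonneg R
    positivity
  linarith
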